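/- Let G be a finite simple graph, let c and c_Π be positive integers, and let N* be a subneighborhood function of G with c-bounded occurrences. Let M ⊆ V(G) be a c_Π-bundle hitting set of G such that for every v ∈ M, the matching number of the subgraph of G induced on N(v) ∖ M is strictly less than c_Π. Then for every integer τ ≥ c_Π there exists a set B ⊆ V(G) with |B| · (τ − c_Π + 1) ≤ c · |M| such that for every vertex v ∉ B, the matching number of the subgraph of G induced on N*(v) ∖ B is at most τ. -/

import Mathlib

/-- There is a matching of size `n` inside the vertex set `S` in the graph `G`:
`n` pairwise disjoint edges of `G` with all endpoints in `S`. -/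
def HasMatchingOfSize {V : Type*} (G : SimpleGraph V) (S : Set V) (n : ℕ) : Prop :=
  ∃ x y : Fin n → V,
    (∀ i, x i ∈ S) ∧ (∀ i, y i ∈ S) ∧ (∀ i, G.Adj (x i) (y i)) ∧
    Function.Injective x ∧ Function.Injective y ∧ (∀ i j, x i ≠ y j)

/-- `B` is a `t`-bundle of `G`: a set of `2t+1` distinct vertices consisting of a
vertex `v` together with a matching `x₁y₁, …, xₜyₜ` all of whose vertices are adjacent
to `v`. -/
def IsBundle {V : Type*} (G : SimpleGraph V) (t : ℕ) (B : Set V) : Prop :=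
  ∃ (v : V) (x y : Fin t → V),
    Function.Injective x ∧ Function.Injective y ∧ (∀ i j, x i ≠ y j) ∧
    (∀ i, v ≠ x i) ∧ (∀ i, v ≠ y i) ∧
    (∀ i, G.Adj (x i) (y i)) ∧ (∀ i, G.Adj v (x i)) ∧ (∀ i, G.Adj v (y i)) ∧
    B = insert v (Set.range x ∪ Set.range y)

/-- `S` is a `t`-bundle hitting set of `G`: it meets every `t`-bundle of `G`. -/
def IsBundleHitting {V : Type*} (G : SimpleGraph V) (t : ℕ) (S : Set V) : Prop :=
  ∀ B : Set V, IsBundle G t B → (S ∩ B).Nonempty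

theorem stmt0 {V : Type*} [Fintype V] (G : SimpleGraph V)
    (c cPi : ℕ) (hc : 0 < c) (hcPi : 0 < cPi)
    (Nstar : V → Set V) (hsub : ∀ v, Nstar v ⊆ G.neighborSet v)
    (hocc : ∀ u : V, {v : V | u ∈ Nstar v}.ncard ≤ c)
    (M : Set V) (hM : IsBundleHitting G cPi M)
    (hmatch : ∀ v ∈ M, ¬ HasMatchingOfSize G (G.neighborSet v \ M) cPi)
    (τ : ℕ) (hτ : cPi ≤ τ) :
    ∃ B : Set V, B.ncard * (τ - cPi + 1) ≤ c * M.ncard ∧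
      ∀ v ∉ B, ¬ HasMatchingOfSize G (Nstar v \ B) (τ + 1) := by
  classical
  set k : ℕ := τ - cPi + 1 with hk
  set B : Set V := {v | k ≤ (Nstar v ∩ M).ncard} with hBdef
  have hNcard : ∀ v : V, (Nstar v ∩ M).ncard = (M.toFinset.filter (· ∈ Nstar v)).card := by
    intro v
    rw [Set.ncard_eq_toFinset_card']
    congr 1
    ext u
    simp [and_comm]
  refine ⟨B, ?_, ?_⟩
  · -- counting argument
    have hBfin : B.toFinset = Finset.univ.filter (· ∈ B) := by
      ext u; simp
    have h1 : B.ncard * k ≤ ∑ v ∈ B.toFinset, (M.toFinset.filter (· ∈ Nstar v)).card := by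
      rw [Set.ncard_eq_toFinset_card']
      calc B.toFinset.card * k = ∑ _v ∈ B.toFinset, k := by
            rw [Finset.sum_const, smul_eq_mul, mul_comm]
        _ ≤ _ := by
            apply Finset.sum_le_sum
            intro v hv
            rw [← hNcard]
            simpa [hBdef] using (Set.mem_toFinset.mp hv)
    have h2 : ∑ v ∈ B.toFinset, (M.toFinset.filter (· ∈ Nstar v)).card
        = ∑ u ∈ M.toFinset, (B.toFinset.filter (fun v => u ∈ Nstar v)).card := by
      simp only [Finset.card_filter]
      rw [Finset.sum_comm]
    have h3 : ∀ u : V, (B.toFinset.filter (fun v => u ∈ Nstar v)).card ≤ c := by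
      intro u
      refine le_trans ?_ (hocc u)
      rw [Set.ncard_eq_toFinset_card']
      apply Finset.card_le_card
      intro v hv
      simp only [Finset.mem_filter] at hv
      simp [hv.2]
    calc B.ncard * k ≤ ∑ u ∈ M.toFinset, (B.toFinset.filter (fun v => u ∈ Nstar v)).card :=
          h2 ▸ h1
      _ ≤ ∑ _u ∈ M.toFinset, c := Finset.sum_le_sum (fun u _ => h3 u)
      _ = c * M.ncard := by
          rw [Finset.sum_const, smul_eq_mul, Set.ncard_eq_toFinset_card', mul_comm]
  · intro v hvB hmat
    obtain ⟨x, y, hx, hy, hadj, hxinj, hyinj, hxy⟩ := hmat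
    have hvcard : (Nstar v ∩ M).ncard < k := by
      simpa [hBdef] using hvB
    have hxN : ∀ i, x i ∈ Nstar v := fun i => (hx i).1
    have hyN : ∀ i, y i ∈ Nstar v := fun i => (hy i).1
    set I : Finset (Fin (τ + 1)) := Finset.univ.filter (fun i => x i ∉ M ∧ y i ∉ M) with hI
    have hIcard : I.card < cPi := by
      by_contra h
      push_neg at h
      obtain ⟨I', hI'sub, hI'card⟩ := Finset.exists_subset_card_eq h
      set f : Fin cPi → Fin (τ + 1) := fun i => ((I'.orderIsoOfFin hI'card) i : Fin (τ + 1))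
        with hf
      have hfinj : Function.Injective f := fun a b hab => by
        exact (I'.orderIsoOfFin hI'card).injective (Subtype.ext hab)
      have hfI : ∀ i, f i ∈ I := fun i => hI'sub ((I'.orderIsoOfFin hI'card) i).2
      have hfree : ∀ i, x (f i) ∉ M ∧ y (f i) ∉ M := by
        intro i
        have := hfI i
        simp only [hI, Finset.mem_filter] at this
        exact this.2
      by_cases hvM : v ∈ M
      · apply hmatch v hvM
        refine ⟨fun i => x (f i), fun i => y (f i), ?_, ?_, fun i => hadj (f i),
          hxinj.comp hfinj, hyinj.comp hfinj, fun i j => hxy (f i) (f j)⟩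
        · exact fun i => ⟨hsub v (hxN (f i)), (hfree i).1⟩
        · exact fun i => ⟨hsub v (hyN (f i)), (hfree i).2⟩
      · have hbundle : IsBundle G cPi (insert v (Set.range (fun i => x (f i)) ∪
            Set.range (fun i => y (f i)))) := by
          refine ⟨v, fun i => x (f i), fun i => y (f i), hxinj.comp hfinj, hyinj.comp hfinj,
            fun i j => hxy (f i) (f j), ?_, ?_, fun i => hadj (f i),
            fun i => hsub v (hxN (f i)), fun i => hsub v (hyN (f i)), rfl⟩
          · intro i hvx
            exact G.loopless.irrefl v (hvx ▸ (hsub v (hxN (f i)) : G.Adj v (x (f i))))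
          · intro i hvy
            exact G.loopless.irrefl v (hvy ▸ (hsub v (hyN (f i)) : G.Adj v (y (f i))))
        obtain ⟨m, hmM, hmB⟩ := hM _ hbundle
        rcases hmB with rfl | hmB
        · exact hvM hmM
        rcases hmB with ⟨i, rfl⟩ | ⟨i, rfl⟩
        · exact (hfree i).1 hmM
        · exact (hfree i).2 hmM
    -- now count vertices in M
    set J : Finset (Fin (τ + 1)) := Finset.univ.filter (fun i => ¬(x i ∉ M ∧ y i ∉ M)) with hJ
    have hIJ : I.card + J.card = τ + 1 := by
      rw [hI, hJ, Finset.card_filter_add_card_filter_not]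
      simp
    set m : Fin (τ + 1) → V := fun i => if x i ∈ M then x i else y i with hm
    have hmem : ∀ i ∈ J, m i ∈ (Nstar v ∩ M).toFinset := by
      intro i hi
      simp only [hJ, Finset.mem_filter, not_and_or, not_not] at hi
      rw [Set.mem_toFinset, hm]
      by_cases hxi : x i ∈ M
      · simp [hxi, hxN i]
      · have hyi : y i ∈ M := by tauto
        simp [hxi, hyi, hyN i]
    have hinj : Set.InjOn m J := by
      intro i _ j _ hij
      by_contra hne
      rw [hm] at hij
      simp only at hij
      split_ifs at hij with h1 h2 h2
      · exact hne (hxinj hij)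
      · exact hxy i j hij
      · exact hxy j i hij.symm
      · exact hne (hyinj hij)
    have hJle : J.card ≤ (Nstar v ∩ M).ncard := by
      rw [Set.ncard_eq_toFinset_card']
      exact Finset.card_le_card_of_injOn m hmem hinj
    omega
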